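/- Let H be a Hilbert space and a : H → H a bounded linear isometry. Set K = ⋂_{n≥0} range(a^n). Then the orthogonal complement K^⊥ is invariant under a. -/

import Mathlib

/-- Wold decomposition, part (ii): for an isometry `a` on a Hilbert space `H`,
the orthogonal complement of `K = ⋂ₙ range (aⁿ)` is invariant under `a`. -/
theorem wold_complement_invariant {H : Type*} [NormedAddCommGroup H] [InnerProductSpace ℂ H]
    [CompleteSpace H] (a : H →L[ℂ] H) (ha : ∀ ξ : H, ‖a ξ‖ = ‖ξ‖) :
    ∀ ξ ∈ (⨅ n : ℕ, LinearMap.range ((a ^ n : H →L[ℂ] H) : H →ₗ[ℂ] H))ᗮ,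
      a ξ ∈ (⨅ n : ℕ, LinearMap.range ((a ^ n : H →L[ℂ] H) : H →ₗ[ℂ] H))ᗮ := by
  intro ξ hξ
  have hinj : Function.Injective a := by
    intro x y hxy
    have : ‖x - y‖ = 0 := by
      have := ha (x - y)
      rwa [map_sub, hxy, sub_self, norm_zero, eq_comm] at this
    simpa [sub_eq_zero] using norm_eq_zero.mp this
  set li : H →ₗᵢ[ℂ] H := ⟨(a : H →ₗ[ℂ] H), ha⟩ with hli
  rw [Submodule.mem_orthogonal] at hξ ⊢
  intro η hη
  simp only [Submodule.mem_iInf] at hη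
  obtain ⟨ζ, hζ⟩ := hη 1
  have hζ' : a ζ = η := by simpa [pow_one] using hζ
  have hζK : ζ ∈ ⨅ n : ℕ, LinearMap.range ((a ^ n : H →L[ℂ] H) : H →ₗ[ℂ] H) := by
    rw [Submodule.mem_iInf]
    intro n
    obtain ⟨w, hw⟩ := hη (n + 1)
    have : a ((a ^ n) w) = a ζ := by
      rw [hζ']
      rw [← hw, pow_succ']
      rfl
    exact ⟨w, hinj this⟩
  have key : (inner ℂ (a ζ) (a ξ) : ℂ) = inner ℂ ζ ξ := li.inner_map_map ζ ξ
  rw [← hζ', key]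
  exact hξ ζ hζK
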